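/- arXiv:math-ph/0603048 — 2 statements merged into one kernel-verified Lean document; each statement's English description precedes it below -/
import Mathlib

section
/- If a Kraus operator K_A(ρ) = Σᵢ Aᵢ ρ Aᵢ† on n×n complex matrices admits an inverse that is also a Kraus operator, i.e. there exist B₁,…,Bₘ with Σᵢⱼ (AᵢBⱼ) ρ (AᵢBⱼ)† = ρ for all ρ, then there exists an invertible matrix A ∈ GL(n,ℂ) such that K_A(ρ) = A ρ A† for all ρ. -/
open Matrix

/-- If a Kraus operator K_A(ρ) = Σᵢ Aᵢ ρ Aᵢᴴ admits an inverse which is again a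
Kraus operator K_B, i.e. Σᵢⱼ (AᵢBⱼ) ρ (AᵢBⱼ)ᴴ = ρ for all ρ, then K_A is given
by a single invertible matrix: K_A(ρ) = C ρ Cᴴ with C ∈ GL(n,ℂ). -/
theorem kraus_invertible_is_GL {n : Type*} [Fintype n] [DecidableEq n] {k m : ℕ}
    (A : Fin k → Matrix n n ℂ) (B : Fin m → Matrix n n ℂ)
    (h : ∀ ρ : Matrix n n ℂ, ∑ i, ∑ j, (A i * B j) * ρ * (A i * B j)ᴴ = ρ) :
    ∃ C : Matrix n n ℂ, IsUnit C ∧ ∀ ρ : Matrix n n ℂ,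
      ∑ i, A i * ρ * (A i)ᴴ = C * ρ * Cᴴ := by
  rcases isEmpty_or_nonempty n with hn | hn
  · exact ⟨1, isUnit_one, fun ρ => Subsingleton.elim _ _⟩
  obtain ⟨p₀⟩ := hn
  have key : ∀ p q r s : n, ∑ i, ∑ j, (A i * B j) r p * star ((A i * B j) s q)
      = if p = r ∧ q = s then 1 else 0 := by
    intro p q r s
    have := congrFun (congrFun (h (Matrix.single p q 1)) r) s
    simp only [Matrix.sum_apply, Matrix.mul_apply, conjTranspose_apply,
      Matrix.single, of_apply, ite_and, ite_mul, mul_ite, one_mul, mul_one, zero_mul,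
      mul_zero, Finset.sum_ite_eq, Finset.sum_ite_eq', Finset.mem_univ, if_true] at this
    simpa [Matrix.mul_apply, ite_and] using this
  -- from a vanishing sum of |z|², get each entry zero
  have sqsum : ∀ f : Fin k → Fin m → ℂ, (∑ i, ∑ j, f i j * star (f i j)) = 0 →
      ∀ i j, f i j = 0 := by
    intro f hf i j
    have hR : (∑ i, ∑ j, Complex.normSq (f i j)) = 0 := by
      have : ((∑ i, ∑ j, Complex.normSq (f i j) : ℝ) : ℂ) = 0 := by
        push_cast
        simpa [Complex.mul_conj] using hf
      exact_mod_cast this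
    have h1 := (Finset.sum_eq_zero_iff_of_nonneg (fun i _ =>
      Finset.sum_nonneg fun j _ => Complex.normSq_nonneg _)).mp hR i
      (Finset.mem_univ i)
    have h2 := (Finset.sum_eq_zero_iff_of_nonneg (fun j _ => Complex.normSq_nonneg _)).mp h1 j
      (Finset.mem_univ j)
    exact Complex.normSq_eq_zero.mp h2
  have offdiag : ∀ (i : Fin k) (j : Fin m) (r p : n), r ≠ p → (A i * B j) r p = 0 := by
    intro i j r p hrp
    refine sqsum (fun i j => (A i * B j) r p) ?_ i j
    have h0 := key p p r r
    rwa [if_neg (by exact fun hpr => hrp hpr.1.symm)] at h0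
  have diag : ∀ (i : Fin k) (j : Fin m) (p q : n), (A i * B j) p p = (A i * B j) q q := by
    intro i j p q
    have S : ∀ a b : n, ∑ i, ∑ j, (A i * B j) a a * star ((A i * B j) b b) = 1 := by
      intro a b
      simpa using key a b a b
    have hz : ∑ i, ∑ j, ((A i * B j) p p - (A i * B j) q q)
        * star ((A i * B j) p p - (A i * B j) q q) = 0 := by
      have expand : ∀ (i : Fin k) (j : Fin m),
          ((A i * B j) p p - (A i * B j) q q) * star ((A i * B j) p p - (A i * B j) q q)
          = (A i * B j) p p * star ((A i * B j) p p)
            - (A i * B j) p p * star ((A i * B j) q q)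
            - (A i * B j) q q * star ((A i * B j) p p)
            + (A i * B j) q q * star ((A i * B j) q q) := by
        intro i j; simp only [star_sub]; ring
      simp only [expand, Finset.sum_add_distrib, Finset.sum_sub_distrib, S p p, S p q, S q p, S q q]
      ring
    have := sqsum _ hz i j
    exact sub_eq_zero.mp this
  set c : Fin k → Fin m → ℂ := fun i j => (A i * B j) p₀ p₀ with hc
  have scal : ∀ i j, A i * B j = c i j • (1 : Matrix n n ℂ) := by
    intro i j
    ext r s
    by_cases hrs : r = s
    · subst hrs
      simp [hc, Matrix.one_apply, diag i j r p₀]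
    · simp [offdiag i j r s hrs, Matrix.one_apply, hrs]
  have hex : ∃ i j, c i j ≠ 0 := by
    by_contra hcon
    push_neg at hcon
    have h1 := key p₀ p₀ p₀ p₀
    rw [if_pos ⟨rfl, rfl⟩] at h1
    have : ∀ i j, (A i * B j) p₀ p₀ = 0 := hcon
    simp [this] at h1
  obtain ⟨i₀, j₀, hc0⟩ := hex
  have hprod : ((c i₀ j₀)⁻¹ • A i₀) * B j₀ = 1 := by
    rw [smul_mul_assoc, scal i₀ j₀, smul_smul, inv_mul_cancel₀ hc0, one_smul]
  have hdet1 : ((c i₀ j₀)⁻¹ • A i₀).det * (B j₀).det = 1 := by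
    rw [← Matrix.det_mul, hprod, Matrix.det_one]
  have hBunit : IsUnit (B j₀) := by
    rw [Matrix.isUnit_iff_isUnit_det]
    exact IsUnit.of_mul_eq_one _ ((mul_comm _ _).trans hdet1)
  have hAunit : IsUnit (A i₀) := by
    rw [Matrix.isUnit_iff_isUnit_det]
    have : IsUnit ((c i₀ j₀)⁻¹ • A i₀).det := IsUnit.of_mul_eq_one _ hdet1
    rw [Matrix.det_smul] at this
    exact (isUnit_of_mul_isUnit_right this)
  have hdet : IsUnit (B j₀).det := (Matrix.isUnit_iff_isUnit_det _).mp hBunit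
  set d : Fin k → ℂ := fun i => c i j₀ / c i₀ j₀ with hd
  have hA : ∀ i, A i = d i • A i₀ := by
    intro i
    have h1 : A i * B j₀ = (d i • A i₀) * B j₀ := by
      rw [smul_mul_assoc, scal i j₀, scal i₀ j₀, smul_smul, hd,
        div_mul_cancel₀ _ hc0]
    calc A i = A i * B j₀ * (B j₀)⁻¹ := by
          rw [Matrix.mul_assoc, Matrix.mul_nonsing_inv _ hdet, Matrix.mul_one]
      _ = (d i • A i₀) * B j₀ * (B j₀)⁻¹ := by rw [h1]
      _ = d i • A i₀ := by
          rw [Matrix.mul_assoc, Matrix.mul_nonsing_inv _ hdet, Matrix.mul_one]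
  set t : ℝ := ∑ i, Complex.normSq (d i) with htdef
  have hdi₀ : d i₀ = 1 := div_self hc0
  have ht : 0 < t := by
    have h1 : Complex.normSq (d i₀) ≤ t :=
      Finset.single_le_sum (fun i _ => Complex.normSq_nonneg _) (Finset.mem_univ i₀)
    rw [hdi₀, Complex.normSq_one] at h1
    exact lt_of_lt_of_le one_pos h1
  have hsqrt : (Real.sqrt t : ℂ) ≠ 0 := by
    simp [Real.sqrt_eq_zero', not_le, ht, ne_of_gt ht]
  refine ⟨(Real.sqrt t : ℂ) • A i₀, ?_, ?_⟩
  · rw [Matrix.isUnit_iff_isUnit_det, Matrix.det_smul]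
    exact ((IsUnit.pow _ (isUnit_iff_ne_zero.mpr hsqrt)).mul
      ((Matrix.isUnit_iff_isUnit_det _).mp hAunit))
  · intro ρ
    calc ∑ i, A i * ρ * (A i)ᴴ
        = ∑ i, (d i * star (d i)) • (A i₀ * ρ * (A i₀)ᴴ) := by
          refine Finset.sum_congr rfl fun i _ => ?_
          rw [hA i, conjTranspose_smul, smul_mul_assoc, smul_mul_assoc, mul_smul_comm,
            smul_smul]
      _ = (t : ℂ) • (A i₀ * ρ * (A i₀)ᴴ) := by
          rw [← Finset.sum_smul]
          congr 1
          rw [htdef]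
          push_cast
          simp [Complex.mul_conj]
      _ = ((Real.sqrt t : ℂ) • A i₀) * ρ * ((Real.sqrt t : ℂ) • A i₀)ᴴ := by
          rw [conjTranspose_smul, smul_mul_assoc, smul_mul_assoc, mul_smul_comm, smul_smul]
          congr 1
          rw [Complex.star_def, Complex.conj_ofReal, ← Complex.ofReal_mul,
            Real.mul_self_sqrt ht.le]
end

section
/- If Σᵢ Cᵢ ρ Cᵢ† = ρ for all n×n complex matrices ρ, where C₁,…,C_m are n×n complex matrices, then each Cᵢ is a scalar multiple of the identity, Cᵢ = αᵢ·I, and Σᵢ |αᵢ|² = 1. -/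
open Matrix

/-- If Σᵢ Cᵢ ρ Cᵢᴴ = ρ for all n×n complex matrices ρ, then each Cᵢ is a scalar
multiple of the identity, Cᵢ = αᵢ·I, with Σᵢ |αᵢ|² = 1. -/
theorem kraus_identity_scalars {n : Type*} [Fintype n] [DecidableEq n] [Nonempty n]
    {m : ℕ} (C : Fin m → Matrix n n ℂ)
    (h : ∀ ρ : Matrix n n ℂ, ∑ i, C i * ρ * (C i)ᴴ = ρ) :
    ∃ α : Fin m → ℂ, (∀ i, C i = α i • (1 : Matrix n n ℂ)) ∧
      ∑ i, Complex.normSq (α i) = 1 := by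
  have key : ∀ a b p q : n, ∑ i, C i p a * star (C i q b)
      = if p = a ∧ q = b then 1 else 0 := by
    intro a b p q
    have := congrFun (congrFun (h (Matrix.single a b 1)) p) q
    simp [Matrix.sum_apply, Matrix.mul_apply, conjTranspose_apply,
      Matrix.single, mul_ite, ite_mul, Finset.sum_ite_eq,
      Finset.sum_ite_eq', ite_and, eq_comm] at this ⊢
    exact this
  have zero_of : ∀ f : Fin m → ℂ, (∑ i, f i * star (f i)) = 0 → ∀ i, f i = 0 := by
    intro f hf i
    have h1 : ∑ i, (Complex.normSq (f i) : ℂ) = 0 := by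
      simpa [Complex.mul_conj] using hf
    have h2 : ∑ i, Complex.normSq (f i) = 0 := by exact_mod_cast h1
    exact Complex.normSq_eq_zero.mp
      ((Finset.sum_eq_zero_iff_of_nonneg
        (fun i _ => Complex.normSq_nonneg (f i))).mp h2 i (Finset.mem_univ i))
  obtain ⟨c⟩ := ‹Nonempty n›
  refine ⟨fun i => C i c c, fun i => ?_, ?_⟩
  · ext p q
    by_cases hpq : p = q
    · subst hpq
      have hz : ∀ j, C j p p - C j c c = 0 := by
        apply zero_of
        have e : ∑ j, (C j p p - C j c c) * star (C j p p - C j c c)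
            = (∑ j, C j p p * star (C j p p)) - (∑ j, C j p p * star (C j c c))
              - ((∑ j, C j c c * star (C j p p)) - ∑ j, C j c c * star (C j c c)) := by
          rw [← Finset.sum_sub_distrib, ← Finset.sum_sub_distrib, ← Finset.sum_sub_distrib]
          apply Finset.sum_congr rfl
          intro j _
          simp [star_sub]
          ring
        rw [e, key p p p p, key p c p c, key c p c p, key c c c c]
        simp
      have := hz i
      have hd : C i p p = C i c c := by linear_combination this
      simp [hd, Matrix.smul_apply, Matrix.one_apply]
    · have hz : ∀ j, C j p q = 0 := by
        apply zero_of
        rw [key q q p p]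
        simp [hpq]
      simp [hz i, Matrix.smul_apply, Matrix.one_apply, hpq]
  · have h1 := key c c c c
    simp only [and_self, if_pos rfl] at h1
    have h2 : ∑ i, (Complex.normSq (C i c c) : ℂ) = 1 := by
      simpa [Complex.mul_conj] using h1
    exact_mod_cast h2
end
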